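/- Ultimate boundedness via scalar comparison: let ξ : [0,∞) → ℝ be differentiable satisfying ξ̇(t) ≤ -δ whenever ξ(t) ≥ B, and ξ̇(t) ≥ δ whenever ξ(t) ≤ -B, for some constants δ > 0, B ≥ 0, with |ξ̇(t)| ≤ Δ for all t. Then for every t ≥ T := max(|ξ(0)| - B, 0)/δ, it holds that |ξ(t)| ≤ B, and for all t ≥ 0, |ξ(t)| ≤ |ξ(0)| + Δt. -/

import Mathlib

open Set

/-- Forward invariance: once `ξ ≤ B`, it stays `≤ B`. -/
lemma aux_inv (ξ ξ' : ℝ → ℝ) (δ B : ℝ) (hδ : 0 < δ)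
    (hder : ∀ t ≥ (0:ℝ), HasDerivAt ξ (ξ' t) t)
    (hup : ∀ t ≥ (0:ℝ), B ≤ ξ t → ξ' t ≤ -δ) :
    ∀ s ≥ (0:ℝ), ξ s ≤ B → ∀ t ≥ s, ξ t ≤ B := by
  intro s hs hξs t hts
  by_contra hgt
  push_neg at hgt
  have hcontOn : ContinuousOn ξ (Icc s t) := fun x hx =>
    (hder x (hs.trans hx.1)).continuousAt.continuousWithinAt
  set S : Set ℝ := Icc s t ∩ ξ ⁻¹' Iic B with hS
  have hSne : S.Nonempty := ⟨s, ⟨le_refl s, hts⟩, hξs⟩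
  have hSclosed : IsClosed S :=
    hcontOn.preimage_isClosed_of_isClosed isClosed_Icc isClosed_Iic
  have hScomp : IsCompact S :=
    isCompact_Icc.of_isClosed_subset hSclosed inter_subset_left
  obtain ⟨⟨hu1, hu2⟩, huB⟩ := hScomp.sSup_mem hSne
  set u := sSup S
  have hu0 : (0:ℝ) ≤ u := hs.trans hu1
  have hbdd : BddAbove S := hScomp.bddAbove
  have hout : ∀ r, u < r → r ≤ t → B < ξ r := by
    intro r hur hrt
    by_contra h
    push_neg at h
    have : r ∈ S := ⟨⟨hu1.trans hur.le, hrt⟩, h⟩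
    exact absurd (le_csSup hbdd this) (not_le.mpr hur)
  have hanti : AntitoneOn ξ (Icc u t) := by
    apply antitoneOn_of_deriv_nonpos (convex_Icc u t)
    · exact fun x hx => (hder x (hu0.trans hx.1)).continuousAt.continuousWithinAt
    · intro x hx
      rw [interior_Icc] at hx
      exact ((hder x (hu0.trans hx.1.le)).differentiableAt).differentiableWithinAt
    · intro x hx
      rw [interior_Icc] at hx
      have hx0 : (0:ℝ) ≤ x := hu0.trans hx.1.le
      rw [(hder x hx0).deriv]
      have := hup x hx0 (hout x hx.1 hx.2.le).le
      linarith
  exact absurd ((hanti ⟨le_refl u, hu2⟩ ⟨hu2, le_refl t⟩ hu2).trans huB) (not_le.mpr hgt)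


/-- The set `{ξ ≤ B}` is reached by time `max (ξ 0 - B) 0 / δ` and is invariant. -/
lemma aux_key (ξ ξ' : ℝ → ℝ) (δ B : ℝ) (hδ : 0 < δ)
    (hder : ∀ t ≥ (0:ℝ), HasDerivAt ξ (ξ' t) t)
    (hup : ∀ t ≥ (0:ℝ), B ≤ ξ t → ξ' t ≤ -δ) :
    ∀ t ≥ max (ξ 0 - B) 0 / δ, ξ t ≤ B := by
  set T := max (ξ 0 - B) 0 / δ with hT
  have hT0 : (0:ℝ) ≤ T := div_nonneg (le_max_right _ _) hδ.le
  intro t ht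
  rcases le_or_gt (ξ 0) B with h0 | h0
  · exact aux_inv ξ ξ' δ B hδ hder hup 0 le_rfl h0 t (hT0.trans ht)
  · have hTval : T = (ξ 0 - B) / δ := by
      rw [hT, max_eq_left (by linarith)]
    have hreach : ∃ s ∈ Icc (0:ℝ) T, ξ s ≤ B := by
      by_contra hc
      push_neg at hc
      have hD : ∀ y ≥ (0:ℝ), HasDerivAt (fun x => ξ x + δ * x) (ξ' y + δ) y := by
        intro y hy
        have := (hder y hy).add ((hasDerivAt_id y).const_mul δ)
        exact this.congr_deriv (by simp)
      have hanti : AntitoneOn (fun x => ξ x + δ * x) (Icc 0 T) := by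
        apply antitoneOn_of_deriv_nonpos (convex_Icc 0 T)
        · exact fun x hx => ((hD x hx.1).continuousAt).continuousWithinAt
        · intro x hx
          rw [interior_Icc] at hx
          exact ((hD x hx.1.le).differentiableAt).differentiableWithinAt
        · intro x hx
          rw [interior_Icc] at hx
          rw [(hD x hx.1.le).deriv]
          have := hup x hx.1.le (hc x ⟨hx.1.le, hx.2.le⟩).le
          linarith
      have h1 := hanti ⟨le_rfl, hT0⟩ ⟨hT0, le_rfl⟩ hT0
      simp only [mul_zero, add_zero] at h1
      have h2 : ξ T ≤ B := by
        rw [hTval] at h1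
        have : δ * ((ξ 0 - B) / δ) = ξ 0 - B := by
          field_simp
        rw [hTval]
        linarith [h1, this]
      exact absurd h2 (not_le.mpr (hc T ⟨hT0, le_rfl⟩))
    obtain ⟨s, ⟨hs0, hsT⟩, hsB⟩ := hreach
    exact aux_inv ξ ξ' δ B hδ hder hup s hs0 hsB t (hsT.trans ht)

theorem stmt_18 (ξ ξ' : ℝ → ℝ) (δ B Δ : ℝ)
    (hδ : 0 < δ) (hB : 0 ≤ B) (hΔ : 0 ≤ Δ)
    (hder : ∀ t ≥ (0:ℝ), HasDerivAt ξ (ξ' t) t)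
    (hbnd : ∀ t ≥ (0:ℝ), |ξ' t| ≤ Δ)
    (hup : ∀ t ≥ (0:ℝ), B ≤ ξ t → ξ' t ≤ -δ)
    (hdown : ∀ t ≥ (0:ℝ), ξ t ≤ -B → δ ≤ ξ' t) :
    (∀ t ≥ max (|ξ 0| - B) 0 / δ, |ξ t| ≤ B) ∧
      ∀ t ≥ (0:ℝ), |ξ t| ≤ |ξ 0| + Δ * t := by
  constructor
  · intro t ht
    have hT0 : (0:ℝ) ≤ max (|ξ 0| - B) 0 / δ := div_nonneg (le_max_right _ _) hδ.le
    have hup' : ξ t ≤ B := by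
      apply aux_key ξ ξ' δ B hδ hder hup t
      refine le_trans ?_ ht
      gcongr
      · exact le_abs_self _
    have hlow : -ξ t ≤ B := by
      apply aux_key (fun x => -ξ x) (fun x => -ξ' x) δ B hδ
        (fun x hx => (hder x hx).neg)
        (fun x hx h => by
          have := hdown x hx (by linarith)
          linarith) t
      refine le_trans ?_ ht
      gcongr
      · exact neg_le_abs (ξ 0)
    exact abs_le.mpr ⟨by linarith, hup'⟩
  · intro t ht
    have hlip : ‖ξ t - ξ 0‖ ≤ Δ * ‖t - 0‖ := by
      apply Convex.norm_image_sub_le_of_norm_hasDerivWithin_le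
        (f' := ξ') ?_ ?_ (convex_Icc 0 t) ⟨le_rfl, ht⟩ ⟨ht, le_rfl⟩
      · exact fun x hx => (hder x hx.1).hasDerivWithinAt
      · exact fun x hx => by rw [Real.norm_eq_abs]; exact hbnd x hx.1
    rw [Real.norm_eq_abs, Real.norm_eq_abs, sub_zero, abs_of_nonneg ht] at hlip
    have := abs_add_le (ξ 0) (ξ t - ξ 0)
    simp only [add_sub_cancel] at this
    linarith
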